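/- The oracle regression-adjusted estimator is unbiased, E[τ̂_adj.oracle] = τ*, and its n-rescaled mean-squared error equals n·E[(τ̂_adj.oracle − τ*)²] = (1/n)·Σ_{i=1}^n { ((1 − π_T)/π_T)·Δ_i(1)² + (π_T/(1 − π_T))·Δ_i(0)² + 2·Δ_i(1)·Δ_i(0) }. -/

import Mathlib

open MeasureTheory ProbabilityTheory
open scoped BigOperators

/-- the oracle regression-adjusted estimator is unbiased for the ATE, and
its `n`-rescaled mean-squared error has the stated exact expression in terms of the
residuals `Δ_i(t) = y_i(t) − f*_t(x_i)`. -/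
theorem oracle_regadj_unbiased_and_mse
    {Ω : Type*} [MeasurableSpace Ω] (P : Measure Ω) [IsProbabilityMeasure P]
    (n d : ℕ) (hn : 0 < n) (πT : ℝ) (hπT : πT ∈ Set.Ioo (0 : ℝ) 1)
    (y1 y0 : Fin n → ℝ) (x : Fin n → Fin d → ℝ)
    (f1 f0 : (Fin d → ℝ) → ℝ)
    (T : Fin n → Ω → ℝ)
    (hTmeas : ∀ i, Measurable (T i))
    (hT01 : ∀ i ω, T i ω = 0 ∨ T i ω = 1)
    (hTber : ∀ i, P {ω | T i ω = 1} = ENNReal.ofReal πT)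
    (hTindep : iIndepFun T P)
    (Y : Fin n → Ω → ℝ)
    (hY : ∀ i ω, Y i ω = if T i ω = 1 then y1 i else y0 i)
    (Δ1 Δ0 : Fin n → ℝ)
    (hΔ1 : ∀ i, Δ1 i = y1 i - f1 (x i)) (hΔ0 : ∀ i, Δ0 i = y0 i - f0 (x i))
    (τstar : ℝ) (hτstar : τstar = (1 / (n : ℝ)) * ∑ i, (y1 i - y0 i))
    (τhat : Ω → ℝ)
    (hτhat : ∀ ω, τhat ω =
      (1 / ((n : ℝ) * πT)) * ∑ i, (Y i ω - f1 (x i)) * T i ω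
        - (1 / ((n : ℝ) * (1 - πT))) * ∑ i, (Y i ω - f0 (x i)) * (1 - T i ω)
        + (1 / (n : ℝ)) * ∑ i, (f1 (x i) - f0 (x i))) :
    (∫ ω, τhat ω ∂P = τstar) ∧
      (n : ℝ) * ∫ ω, (τhat ω - τstar) ^ 2 ∂P
        = (1 / (n : ℝ)) * ∑ i,
            ((1 - πT) / πT * (Δ1 i) ^ 2 + πT / (1 - πT) * (Δ0 i) ^ 2
              + 2 * Δ1 i * Δ0 i) := by
  obtain ⟨hπ0, hπ1⟩ := hπT
  have hπ1' : (0:ℝ) < 1 - πT := by linarith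
  have hnR : (0:ℝ) < n := Nat.cast_pos.mpr hn
  set c : Fin n → ℝ := fun i => Δ1 i / πT + Δ0 i / (1 - πT) with hc
  -- basic integrability helper
  have hint_bd : ∀ (f : Ω → ℝ) (C : ℝ), Measurable f → (∀ ω, ‖f ω‖ ≤ C) →
      Integrable f P := fun f C hm hb =>
    ⟨hm.aestronglyMeasurable, HasFiniteIntegral.of_bounded (ae_of_all _ hb)⟩
  have hTbd : ∀ i ω, ‖T i ω‖ ≤ 1 := by
    intro i ω; rcases hT01 i ω with h | h <;> simp [h]
  have hTint : ∀ i, Integrable (T i) P := fun i => hint_bd _ 1 (hTmeas i) (hTbd i)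
  have hεbd : ∀ i ω, ‖T i ω - πT‖ ≤ 1 := by
    intro i ω
    rw [Real.norm_eq_abs, abs_le]
    rcases hT01 i ω with h | h <;> rw [h] <;> constructor <;> linarith
  have hεint : ∀ i, Integrable (fun ω => T i ω - πT) P :=
    fun i => (hTint i).sub (integrable_const _)
  -- first moment of T i
  have hTint_eq : ∀ i, ∫ ω, T i ω ∂P = πT := by
    intro i
    have hm : MeasurableSet {ω | T i ω = 1} := hTmeas i (measurableSet_singleton 1)
    have hrep : (fun ω => T i ω) = Set.indicator {ω | T i ω = 1} (fun _ => (1:ℝ)) := by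
      funext ω
      rcases hT01 i ω with h | h <;> simp [Set.indicator_apply, h]
    rw [hrep, integral_indicator_const (1:ℝ) hm, measureReal_def, hTber i, smul_eq_mul, mul_one,
      ENNReal.toReal_ofReal hπ0.le]
  have hεmean : ∀ i, ∫ ω, (T i ω - πT) ∂P = 0 := by
    intro i
    rw [integral_sub (hTint i) (integrable_const _), hTint_eq, integral_const]
    simp
  -- products
  have hεmul_int : ∀ i j, Integrable (fun ω => (T i ω - πT) * (T j ω - πT)) P := by
    intro i j
    refine hint_bd _ 1 (((hTmeas i).sub measurable_const).mul
      ((hTmeas j).sub measurable_const)) fun ω => ?_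
    rw [norm_mul]
    exact mul_le_one₀ (hεbd i ω) (norm_nonneg _) (hεbd j ω)
  have hdiag : ∀ i, ∫ ω, (T i ω - πT) * (T i ω - πT) ∂P = πT * (1 - πT) := by
    intro i
    have hexp : ∀ ω, (T i ω - πT) * (T i ω - πT) = (1 - 2*πT) * T i ω + πT*πT := by
      intro ω; rcases hT01 i ω with h | h <;> rw [h] <;> ring
    simp_rw [hexp]
    rw [integral_add ((hTint i).const_mul _) (integrable_const _), integral_const_mul,
      hTint_eq, integral_const]
    simp; ring
  have hcross : ∀ i j, i ≠ j → ∫ ω, (T i ω - πT) * (T j ω - πT) ∂P = 0 := by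
    intro i j hij
    have hTmul : ∫ ω, T i ω * T j ω ∂P = πT * πT := by
      have h := (hTindep.indepFun hij).integral_fun_mul_eq_mul_integral
        (hTint i).aestronglyMeasurable (hTint j).aestronglyMeasurable
      simpa [hTint_eq] using h
    have hI1 : Integrable (fun ω => T i ω * T j ω) P :=
      hint_bd _ 1 ((hTmeas i).mul (hTmeas j)) fun ω => by
        rw [norm_mul]; exact mul_le_one₀ (hTbd i ω) (norm_nonneg _) (hTbd j ω)
    have hexp : ∀ ω, (T i ω - πT) * (T j ω - πT)
        = (T i ω * T j ω - πT * T i ω - πT * T j ω) + πT*πT := by intro ω; ring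
    have ha : Integrable (fun ω => T i ω * T j ω - πT * T i ω) P :=
      hI1.sub ((hTint i).const_mul πT)
    have hb : Integrable (fun ω => T i ω * T j ω - πT * T i ω - πT * T j ω) P :=
      ha.sub ((hTint j).const_mul πT)
    simp_rw [hexp]
    rw [integral_add hb (integrable_const _),
      integral_sub ha ((hTint j).const_mul πT),
      integral_sub hI1 ((hTint i).const_mul πT), integral_const_mul, integral_const_mul,
      hTmul, hTint_eq, hTint_eq, integral_const]
    simp
  -- key pointwise identity
  have key : ∀ ω, τhat ω - τstar = (1/(n:ℝ)) * ∑ i, c i * (T i ω - πT) := by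
    intro ω
    rw [hτhat, hτstar, Finset.mul_sum, Finset.mul_sum, Finset.mul_sum, Finset.mul_sum,
      Finset.mul_sum, ← Finset.sum_sub_distrib, ← Finset.sum_add_distrib,
      ← Finset.sum_sub_distrib]
    refine Finset.sum_congr rfl fun i _ => ?_
    rw [hY, hc]
    rcases hT01 i ω with h | h <;> rw [h] <;> simp only [one_ne_zero, if_true, if_false,
      zero_ne_one, if_neg (by norm_num : ¬ (0:ℝ) = 1), if_pos rfl] <;>
      rw [hΔ1, hΔ0] <;> field_simp <;> ring
  have key' : ∀ ω, τhat ω = τstar + (1/(n:ℝ)) * ∑ i, c i * (T i ω - πT) := by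
    intro ω; have := key ω; linarith
  have hSint : Integrable (fun ω => ∑ i, c i * (T i ω - πT)) P :=
    integrable_finset_sum _ fun i _ => (hεint i).const_mul _
  constructor
  · -- unbiasedness
    simp_rw [key']
    rw [integral_add (integrable_const _) (hSint.const_mul _), integral_const,
      integral_const_mul, integral_finset_sum _ (fun i _ => (hεint i).const_mul _)]
    have : ∀ i ∈ Finset.univ, ∫ ω, c i * (T i ω - πT) ∂P = 0 := by
      intro i _; rw [integral_const_mul, hεmean i, mul_zero]
    rw [Finset.sum_congr rfl this]
    simp
  · -- MSE
    have hS2 : ∫ ω, (∑ i, c i * (T i ω - πT))^2 ∂P = πT*(1-πT) * ∑ i, (c i)^2 := by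
      have hexp : ∀ ω, (∑ i, c i * (T i ω - πT))^2
          = ∑ i, ∑ j, (c i * c j) * ((T i ω - πT) * (T j ω - πT)) := by
        intro ω
        rw [sq, Finset.sum_mul_sum]
        exact Finset.sum_congr rfl fun i _ => Finset.sum_congr rfl fun j _ => by ring
      simp_rw [hexp]
      rw [integral_finset_sum _ (fun i _ => integrable_finset_sum _
        (fun j _ => (hεmul_int i j).const_mul _))]
      have hinner : ∀ i ∈ Finset.univ,
          ∫ ω, ∑ j, (c i * c j) * ((T i ω - πT) * (T j ω - πT)) ∂P
            = πT*(1-πT) * (c i)^2 := by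
        intro i _
        rw [integral_finset_sum _ (fun j _ => (hεmul_int i j).const_mul _)]
        have : ∀ j ∈ Finset.univ,
            ∫ ω, (c i * c j) * ((T i ω - πT) * (T j ω - πT)) ∂P
              = if j = i then πT*(1-πT) * (c i)^2 else 0 := by
          intro j _
          rw [integral_const_mul]
          by_cases hji : j = i
          · subst hji; rw [if_pos rfl, hdiag]; ring
          · rw [if_neg hji, hcross i j (fun h => hji h.symm), mul_zero]
        rw [Finset.sum_congr rfl this, Finset.sum_ite_eq' _ i _, if_pos (Finset.mem_univ i)]
      rw [Finset.sum_congr rfl hinner, ← Finset.mul_sum]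
    have hterm : ∀ i ∈ Finset.univ, (1 - πT) / πT * (Δ1 i) ^ 2 + πT / (1 - πT) * (Δ0 i) ^ 2
        + 2 * Δ1 i * Δ0 i = πT*(1-πT) * (c i)^2 := by
      intro i _
      rw [hc]
      field_simp
      ring
    simp_rw [key']
    have hpt : ∀ ω, (τstar + (1/(n:ℝ)) * ∑ i, c i * (T i ω - πT) - τstar)^2
        = (1/(n:ℝ))^2 * (∑ i, c i * (T i ω - πT))^2 := by intro ω; ring
    simp_rw [hpt]
    rw [integral_const_mul, hS2, Finset.sum_congr rfl hterm, ← Finset.mul_sum]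
    field_simp
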